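/- arXiv:1307.7975 — 6 statements merged into one kernel-verified Lean document; each statement's English description precedes it below -/
import Mathlib

section
/- Let d ≥ 1 and let F : ℝ^d → ℝ be measurable. Suppose there exist a constant k ∈ ℝ, a vector ξ ∈ ℝ^d, and a symmetric positive definite d×d matrix Q such that F(α) ≤ k − (1/2)(α−ξ)ᵀQ(α−ξ) for all α ∈ ℝ^d. Let g(α) = N(α|μ*, Q*⁻¹) be a Gaussian density with μ* ∈ ℝ^d and Q* symmetric positive definite, and define the importance weight ω(α) = exp(F(α))/g(α). Let n > 0 be a real number. If Q* − n(Q* − Q) ≻ 0, then for every real m with 0 ≤ m ≤ n the integral ∫_{ℝ^d} ω(α)^m g(α) dα is finite. -/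
open MeasureTheory Matrix Filter

lemma myPosDef.smul {d : ℕ} {A : Matrix (Fin d) (Fin d) ℝ} (hA : A.PosDef) {c : ℝ}
    (hc : 0 < c) : (c • A).PosDef := by
  refine ⟨?_, fun x hx => ?_⟩
  · unfold Matrix.IsHermitian
    rw [Matrix.conjTranspose_smul, hA.1.eq]
    simp
  · exact (Matrix.PosDef.smul hA hc).2 hx

lemma myPosSemidef.smul {d : ℕ} {A : Matrix (Fin d) (Fin d) ℝ} (hA : A.PosSemidef) {c : ℝ}
    (hc : 0 ≤ c) : (c • A).PosSemidef := by
  refine ⟨?_, fun x => ?_⟩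
  · unfold Matrix.IsHermitian
    rw [Matrix.conjTranspose_smul, hA.1.eq]
    simp
  · exact (Matrix.PosSemidef.smul hA hc).2 x

lemma convex_posDef {d : ℕ} {A B : Matrix (Fin d) (Fin d) ℝ} (hA : A.PosDef) (hB : B.PosDef)
    {t : ℝ} (ht0 : 0 ≤ t) (ht1 : t ≤ 1) : ((1 - t) • A + t • B).PosDef := by
  rcases eq_or_lt_of_le ht0 with h | h
  · exact Matrix.PosDef.add_posSemidef (by simpa [← h] using hA)
      (myPosSemidef.smul hB.posSemidef ht0)
  · exact Matrix.PosDef.posSemidef_add (myPosSemidef.smul hA.posSemidef (by linarith))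
      (myPosDef.smul hB h)

lemma quad_continuous {d : ℕ} (A : Matrix (Fin d) (Fin d) ℝ) :
    Continuous fun x : Fin d → ℝ => x ⬝ᵥ A *ᵥ x := by
  simp only [dotProduct, Matrix.mulVec]
  fun_prop

lemma dot_self_continuous {d : ℕ} :
    Continuous fun x : Fin d → ℝ => x ⬝ᵥ x := by
  unfold dotProduct
  fun_prop

lemma dot_self_pos {d : ℕ} {x : Fin d → ℝ} (hx : x ≠ 0) : 0 < x ⬝ᵥ x := by
  simpa using Matrix.dotProduct_star_self_pos_iff.mpr hx

lemma posDef_lb {d : ℕ} (hd : 1 ≤ d) {A : Matrix (Fin d) (Fin d) ℝ} (hA : A.PosDef) :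
    ∃ ε > 0, ∀ x : Fin d → ℝ, ε * (x ⬝ᵥ x) ≤ x ⬝ᵥ A *ᵥ x := by
  set S : Set (Fin d → ℝ) := {x | x ⬝ᵥ x = 1} with hS
  have hclosed : IsClosed S := isClosed_eq dot_self_continuous continuous_const
  have hbdd : Bornology.IsBounded S := by
    apply Bornology.IsBounded.subset (Metric.isBounded_closedBall (x := (0 : Fin d → ℝ)) (r := 1))
    intro x hx
    simp only [Metric.mem_closedBall, dist_zero_right]
    rw [pi_norm_le_iff_of_nonneg (by norm_num)]
    intro i
    have h1 : x i * x i ≤ x ⬝ᵥ x := by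
      unfold dotProduct
      exact Finset.single_le_sum (fun j _ => mul_self_nonneg (x j)) (Finset.mem_univ i)
    rw [hx] at h1
    rw [Real.norm_eq_abs, abs_le]
    constructor <;> nlinarith
  have hcompact : IsCompact S := Metric.isCompact_of_isClosed_isBounded hclosed hbdd
  have hne : S.Nonempty := by
    refine ⟨Pi.single ⟨0, hd⟩ 1, ?_⟩
    simp only [hS, Set.mem_setOf_eq]
    unfold dotProduct
    simp [Pi.single_apply]
  obtain ⟨z, hzS, hz⟩ := hcompact.exists_isMinOn hne (quad_continuous A).continuousOn
  have hz1 : z ⬝ᵥ z = 1 := hzS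
  have hzne : z ≠ 0 := by
    intro h; rw [h] at hz1; simp at hz1
  refine ⟨z ⬝ᵥ A *ᵥ z, by simpa using hA.dotProduct_mulVec_pos hzne, fun x => ?_⟩
  by_cases hx : x = 0
  · simp [hx]
  · have hxx : 0 < x ⬝ᵥ x := dot_self_pos hx
    set c : ℝ := Real.sqrt (x ⬝ᵥ x) with hc
    have hcpos : 0 < c := Real.sqrt_pos.mpr hxx
    have hc2 : c * c = x ⬝ᵥ x := Real.mul_self_sqrt hxx.le
    set y : Fin d → ℝ := c⁻¹ • x with hy
    have hyy : y ⬝ᵥ y = 1 := by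
      rw [hy, smul_dotProduct, dotProduct_smul, smul_eq_mul, smul_eq_mul]
      field_simp
      nlinarith
    have hyA : y ⬝ᵥ A *ᵥ y = c⁻¹ * (c⁻¹ * (x ⬝ᵥ A *ᵥ x)) := by
      rw [hy, Matrix.mulVec_smul, smul_dotProduct, dotProduct_smul,
        smul_eq_mul, smul_eq_mul]
    have hmin : z ⬝ᵥ A *ᵥ z ≤ c⁻¹ * (c⁻¹ * (x ⬝ᵥ A *ᵥ x)) := by
      rw [← hyA]; exact hz hyy
    have h2 : z ⬝ᵥ A *ᵥ z * (c * c) ≤ x ⬝ᵥ A *ᵥ x := by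
      rw [← sub_nonneg] at hmin ⊢
      have heq : x ⬝ᵥ A *ᵥ x - z ⬝ᵥ A *ᵥ z * (c * c)
          = (c⁻¹ * (c⁻¹ * (x ⬝ᵥ A *ᵥ x)) - z ⬝ᵥ A *ᵥ z) * (c * c) := by
        field_simp
      rw [heq]
      positivity
    rw [hc2] at h2
    linarith

lemma quad_expand {d : ℕ} {M : Matrix (Fin d) (Fin d) ℝ} (hM : Mᵀ = M)
    (c x : Fin d → ℝ) :
    (x - c) ⬝ᵥ M *ᵥ (x - c) = x ⬝ᵥ M *ᵥ x - 2 * ((M *ᵥ c) ⬝ᵥ x) + c ⬝ᵥ M *ᵥ c := by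
  have h1 : c ⬝ᵥ (M *ᵥ x) = (M *ᵥ c) ⬝ᵥ x := by
    rw [Matrix.dotProduct_mulVec, ← Matrix.mulVec_transpose, hM]
  rw [Matrix.mulVec_sub, sub_dotProduct, dotProduct_sub, dotProduct_sub, h1,
    dotProduct_comm x (M *ᵥ c)]
  ring

lemma amgm_dot {d : ℕ} {ε : ℝ} (hε : 0 < ε) (w x : Fin d → ℝ) :
    2 * (w ⬝ᵥ x) ≤ ε / 2 * (x ⬝ᵥ x) + 2 / ε * (w ⬝ᵥ w) := by
  unfold dotProduct
  rw [Finset.mul_sum, Finset.mul_sum, Finset.mul_sum, ← Finset.sum_add_distrib]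
  apply Finset.sum_le_sum
  intro i _
  rw [← sub_nonneg]
  have heq : ε / 2 * (x i * x i) + 2 / ε * (w i * w i) - 2 * (w i * x i)
      = (ε * x i - 2 * w i) ^ 2 / (2 * ε) := by
    field_simp; ring
  rw [heq]; positivity

/-- The Gaussian density `N(·|μ, P⁻¹)` on `ℝ^d` with mean `μ` and precision matrix `P`. -/
noncomputable def gaussDensity {d : ℕ} (μ : Fin d → ℝ) (P : Matrix (Fin d) (Fin d) ℝ)
    (α : Fin d → ℝ) : ℝ :=
  (2 * Real.pi) ^ (-(d : ℝ) / 2) * Real.sqrt P.det *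
    Real.exp (-(1 / 2) * ((α - μ) ⬝ᵥ P.mulVec (α - μ)))

theorem stmt0 (d : ℕ) (hd : 1 ≤ d) (F : (Fin d → ℝ) → ℝ) (hF : Measurable F)
    (k : ℝ) (ξ : Fin d → ℝ) (Q : Matrix (Fin d) (Fin d) ℝ) (hQ : Q.PosDef)
    (hbound : ∀ α, F α ≤ k - (1 / 2) * ((α - ξ) ⬝ᵥ Q.mulVec (α - ξ)))
    (μs : Fin d → ℝ) (Qs : Matrix (Fin d) (Fin d) ℝ) (hQs : Qs.PosDef)
    (n : ℝ) (hn : 0 < n)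
    (hpd : (Qs - n • (Qs - Q)).PosDef) :
    ∀ m : ℝ, 0 ≤ m → m ≤ n →
      ∫⁻ α, ENNReal.ofReal
        ((Real.exp (F α) / gaussDensity μs Qs α) ^ m * gaussDensity μs Qs α) < ⊤ := by
  intro m hm0 hmn
  -- constants
  set c0 : ℝ := (2 * Real.pi) ^ (-(d : ℝ) / 2) * Real.sqrt Qs.det with hc0def
  have hc0 : 0 < c0 := by
    apply mul_pos
    · exact Real.rpow_pos_of_pos (by positivity) _
    · exact Real.sqrt_pos.mpr hQs.det_pos
  -- symmetry
  have hQt : Qᵀ = Q := by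
    have := hQ.1
    rwa [Matrix.IsHermitian, Matrix.conjTranspose_eq_transpose_of_trivial] at this
  have hQst : Qsᵀ = Qs := by
    have := hQs.1
    rwa [Matrix.IsHermitian, Matrix.conjTranspose_eq_transpose_of_trivial] at this
  -- positive definiteness of the interpolated matrix
  have hB : (Qs - m • (Qs - Q)).PosDef := by
    have ht0 : 0 ≤ m / n := div_nonneg hm0 hn.le
    have ht1 : m / n ≤ 1 := (div_le_one hn).mpr hmn
    have hBeq : Qs - m • (Qs - Q) = (1 - m / n) • Qs + (m / n) • (Qs - n • (Qs - Q)) := by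
      ext i j
      simp only [Matrix.sub_apply, Matrix.add_apply, Matrix.smul_apply, smul_eq_mul]
      field_simp
      ring
    rw [hBeq]
    exact convex_posDef hQs hpd ht0 ht1
  obtain ⟨ε, hε, hεB⟩ := posDef_lb hd hB
  -- quadratic form combination
  have hquadB : ∀ α : Fin d → ℝ, α ⬝ᵥ (Qs - m • (Qs - Q)) *ᵥ α
      = m * (α ⬝ᵥ Q *ᵥ α) + (1 - m) * (α ⬝ᵥ Qs *ᵥ α) := by
    intro α
    rw [Matrix.sub_mulVec, Matrix.smul_mulVec, Matrix.sub_mulVec, dotProduct_sub,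
      dotProduct_smul, dotProduct_sub, smul_eq_mul]
    ring
  set w : Fin d → ℝ := m • (Q *ᵥ ξ) + (1 - m) • (Qs *ᵥ μs) with hwdef
  have hw : ∀ α : Fin d → ℝ, w ⬝ᵥ α
      = m * ((Q *ᵥ ξ) ⬝ᵥ α) + (1 - m) * ((Qs *ᵥ μs) ⬝ᵥ α) := by
    intro α
    rw [hwdef, add_dotProduct, smul_dotProduct, smul_dotProduct,
      smul_eq_mul, smul_eq_mul]
  set C : ℝ := 2 / ε * (w ⬝ᵥ w) - (m * (ξ ⬝ᵥ Q *ᵥ ξ) + (1 - m) * (μs ⬝ᵥ Qs *ᵥ μs)) with hCdef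
  have hkey : ∀ α : Fin d → ℝ,
      ε / 2 * (α ⬝ᵥ α) - C
        ≤ m * ((α - ξ) ⬝ᵥ Q *ᵥ (α - ξ)) + (1 - m) * ((α - μs) ⬝ᵥ Qs *ᵥ (α - μs)) := by
    intro α
    rw [quad_expand hQt, quad_expand hQst]
    have h1 := hεB α
    rw [hquadB α] at h1
    have h2 := amgm_dot hε w α
    rw [hw α] at h2
    rw [hCdef]
    nlinarith [h1, h2]
  -- pointwise rewriting of the integrand
  have hfeq : ∀ α : Fin d → ℝ,
      (Real.exp (F α) / gaussDensity μs Qs α) ^ m * gaussDensity μs Qs α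
        = (c0 / c0 ^ m)
            * Real.exp (m * F α + (1 - m) * (-(1 / 2) * ((α - μs) ⬝ᵥ Qs *ᵥ (α - μs)))) := by
    intro α
    unfold gaussDensity
    set t : ℝ := -(1 / 2) * ((α - μs) ⬝ᵥ Qs *ᵥ (α - μs)) with htdef
    rw [← hc0def]
    have h1 : Real.exp (F α) / (c0 * Real.exp t) = Real.exp (F α - t) / c0 := by
      rw [Real.exp_sub]
      field_simp
    rw [h1, Real.div_rpow (Real.exp_nonneg _) hc0.le, ← Real.exp_mul]
    have h2 : Real.exp ((F α - t) * m) * Real.exp t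
        = Real.exp (m * F α + (1 - m) * t) := by
      rw [← Real.exp_add]; congr 1; ring
    rw [← h2]
    ring
  -- exponent bound
  have hexp_le : ∀ α : Fin d → ℝ,
      m * F α + (1 - m) * (-(1 / 2) * ((α - μs) ⬝ᵥ Qs *ᵥ (α - μs)))
        ≤ m * k + C / 2 - ε / 4 * (α ⬝ᵥ α) := by
    intro α
    have h1 : m * F α ≤ m * (k - 1 / 2 * ((α - ξ) ⬝ᵥ Q *ᵥ (α - ξ))) :=
      mul_le_mul_of_nonneg_left (hbound α) hm0
    have h2 := hkey α
    nlinarith [h1, h2]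
  -- integrable dominating function
  set K : ℝ := c0 / c0 ^ m * Real.exp (m * k + C / 2) with hKdef
  have hKpos : 0 < K := by
    apply mul_pos
    · positivity
    · exact Real.exp_pos _
  have hint : Integrable (fun α : Fin d → ℝ => K * Real.exp (-(ε / 4) * (α ⬝ᵥ α))) := by
    apply Integrable.const_mul
    have hprod : (fun α : Fin d → ℝ => Real.exp (-(ε / 4) * (α ⬝ᵥ α)))
        = fun α : Fin d → ℝ => ∏ i, Real.exp (-(ε / 4) * (α i) ^ 2) := by
      funext α
      rw [← Real.exp_sum]
      congr 1
      unfold dotProduct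
      rw [Finset.mul_sum]
      exact Finset.sum_congr rfl fun i _ => by ring
    rw [hprod]
    exact Integrable.fintype_prod fun i => integrable_exp_neg_mul_sq (by positivity)
  -- pointwise bound
  have hle : ∀ α : Fin d → ℝ,
      (Real.exp (F α) / gaussDensity μs Qs α) ^ m * gaussDensity μs Qs α
        ≤ K * Real.exp (-(ε / 4) * (α ⬝ᵥ α)) := by
    intro α
    rw [hfeq α, hKdef, mul_assoc, ← Real.exp_add]
    apply mul_le_mul_of_nonneg_left _ (by positivity)
    apply Real.exp_le_exp.mpr
    have := hexp_le α
    linarith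
  calc ∫⁻ α, ENNReal.ofReal
        ((Real.exp (F α) / gaussDensity μs Qs α) ^ m * gaussDensity μs Qs α)
      ≤ ∫⁻ α, ENNReal.ofReal (K * Real.exp (-(ε / 4) * (α ⬝ᵥ α))) :=
        lintegral_mono fun α => ENNReal.ofReal_le_ofReal (hle α)
    _ < ⊤ := hint.lintegral_lt_top
end

section
/- Let d ≥ 1 and let l : ℝ^d → ℝ be measurable. Let p(α) = N(α|μ, Q⁻¹) with Q symmetric positive definite, let g(α) = N(α|μ*, Q*⁻¹) with Q* symmetric positive definite, and define ω(α) = exp(l(α)) p(α) / g(α). Suppose there exist an index j ∈ {1,…,d} and a sign s ∈ {−1,+1} such that for every fixed value of the coordinates α_{−j} = (α_1,…,α_{j−1},α_{j+1},…,α_d), the ratio l(α)/α_j² tends to 0 as s·α_j → +∞. Let n > 0 be a real number. If Q* − n(Q* − Q) ≺ 0 (negative definite), then ∫_{ℝ^d} ω(α)^n g(α) dα = +∞. -/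
set_option maxHeartbeats 1000000


open MeasureTheory Matrix Filter

private lemma quad_expand_s2 {d : ℕ} (M : Matrix (Fin d) (Fin d) ℝ) (w e : Fin d → ℝ) (u : ℝ) :
    (w + u • e) ⬝ᵥ M.mulVec (w + u • e)
      = w ⬝ᵥ M.mulVec w + (w ⬝ᵥ M.mulVec e + e ⬝ᵥ M.mulVec w) * u
        + (e ⬝ᵥ M.mulVec e) * u ^ 2 := by
  simp only [Matrix.mulVec_add, Matrix.mulVec_smul, dotProduct_add, add_dotProduct,
    dotProduct_smul, smul_dotProduct, smul_eq_mul]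
  ring

private lemma single_quad {d : ℕ} (M : Matrix (Fin d) (Fin d) ℝ) (j : Fin d) :
    (Pi.single j 1 : Fin d → ℝ) ⬝ᵥ M.mulVec (Pi.single j 1) = M j j := by
  simp [Matrix.mulVec, dotProduct, Pi.single_apply]

private lemma gaussDensity_pos {d : ℕ} (μ : Fin d → ℝ) {P : Matrix (Fin d) (Fin d) ℝ}
    (hP : P.PosDef) (α : Fin d → ℝ) : 0 < gaussDensity μ P α := by
  have h1 : (0:ℝ) < (2 * Real.pi) ^ (-(d : ℝ) / 2) :=
    Real.rpow_pos_of_pos (by positivity) _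
  have h2 : 0 < Real.sqrt P.det := Real.sqrt_pos.mpr hP.det_pos
  unfold gaussDensity
  positivity

theorem stmt2 (d : ℕ) (hd : 1 ≤ d) (l : (Fin d → ℝ) → ℝ) (hl : Measurable l)
    (μ μs : Fin d → ℝ) (Q Qs : Matrix (Fin d) (Fin d) ℝ)
    (hQ : Q.PosDef) (hQs : Qs.PosDef)
    (hlim : ∃ (j : Fin d) (s : ℝ), (s = 1 ∨ s = -1) ∧
      ∀ α : Fin d → ℝ,
        Tendsto (fun t : ℝ => l (Function.update α j (s * t)) / (s * t) ^ 2)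
          atTop (nhds 0))
    (n : ℝ) (hn : 0 < n)
    (hnd : (-(Qs - n • (Qs - Q))).PosDef) :
    ∫⁻ α, ENNReal.ofReal
      ((Real.exp (l α) * gaussDensity μ Q α / gaussDensity μs Qs α) ^ n *
        gaussDensity μs Qs α) = ⊤ := by
  obtain ⟨j, s, hs, hlim⟩ := hlim
  have hs2 : s ^ 2 = 1 := by rcases hs with h | h <;> norm_num [h]
  set f : (Fin d → ℝ) → ℝ :=
    fun α => (Real.exp (l α) * gaussDensity μ Q α / gaussDensity μs Qs α) ^ n *
      gaussDensity μs Qs α with hf_def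
  set Cp : ℝ := (2 * Real.pi) ^ (-(d : ℝ) / 2) * Real.sqrt Q.det with hCp_def
  set Cg : ℝ := (2 * Real.pi) ^ (-(d : ℝ) / 2) * Real.sqrt Qs.det with hCg_def
  have hCp : 0 < Cp := by
    have h1 : (0:ℝ) < (2 * Real.pi) ^ (-(d : ℝ) / 2) :=
      Real.rpow_pos_of_pos (by positivity) _
    have h2 : 0 < Real.sqrt Q.det := Real.sqrt_pos.mpr hQ.det_pos
    positivity
  have hCg : 0 < Cg := by
    have h1 : (0:ℝ) < (2 * Real.pi) ^ (-(d : ℝ) / 2) :=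
      Real.rpow_pos_of_pos (by positivity) _
    have h2 : 0 < Real.sqrt Qs.det := Real.sqrt_pos.mpr hQs.det_pos
    positivity
  set qp : (Fin d → ℝ) → ℝ := fun α => (α - μ) ⬝ᵥ Q.mulVec (α - μ) with hqp_def
  set qg : (Fin d → ℝ) → ℝ := fun α => (α - μs) ⬝ᵥ Qs.mulVec (α - μs) with hqg_def
  have hp : ∀ α, gaussDensity μ Q α = Cp * Real.exp (-(1/2) * qp α) := fun _ => rfl
  have hg : ∀ α, gaussDensity μs Qs α = Cg * Real.exp (-(1/2) * qg α) := fun _ => rfl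
  have key : ∀ α, f α =
      Cg * Real.exp (n * l α + n * Real.log Cp - n * Real.log Cg
        - n/2 * qp α + (n-1)/2 * qg α) := by
    intro α
    have hppos := gaussDensity_pos μ hQ α
    have hgpos := gaussDensity_pos μs hQs α
    have hbase : 0 < Real.exp (l α) * gaussDensity μ Q α / gaussDensity μs Qs α := by
      positivity
    have hlog : Real.log (Real.exp (l α) * gaussDensity μ Q α / gaussDensity μs Qs α)
        = l α + (Real.log Cp + (-(1/2) * qp α)) - (Real.log Cg + (-(1/2) * qg α)) := by
      rw [Real.log_div (by positivity) hgpos.ne', Real.log_mul (Real.exp_ne_zero _) hppos.ne',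
        Real.log_exp, hp, hg, Real.log_mul hCp.ne' (Real.exp_ne_zero _),
        Real.log_mul hCg.ne' (Real.exp_ne_zero _), Real.log_exp, Real.log_exp]
    show (Real.exp (l α) * gaussDensity μ Q α / gaussDensity μs Qs α) ^ n *
        gaussDensity μs Qs α = _
    rw [Real.rpow_def_of_pos hbase, hlog, hg α, mul_left_comm, ← Real.exp_add]
    congr 1
    rw [Real.exp_eq_exp]
    ring
  -- positivity of the diagonal entry of the combined precision matrix
  have hγ : 0 < (n - 1) * Qs j j - n * Q j j := by
    have hne : (Pi.single j 1 : Fin d → ℝ) ≠ 0 := by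
      intro h; simpa using congrFun h j
    have h := hnd.dotProduct_mulVec_pos hne
    have h2 : (Pi.single j 1 : Fin d → ℝ) ⬝ᵥ (-(Qs - n • (Qs - Q))).mulVec (Pi.single j 1)
        = (n - 1) * Qs j j - n * Q j j := by
      rw [single_quad]
      simp only [Matrix.neg_apply, Matrix.sub_apply, Matrix.smul_apply, smul_eq_mul]
      ring
    simp only [star_trivial] at h
    rwa [h2] at h
  -- measurability
  have hfm : Measurable fun α => ENNReal.ofReal (f α) := by
    have hgd : ∀ (m : Fin d → ℝ) (M : Matrix (Fin d) (Fin d) ℝ),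
        Measurable (gaussDensity m M) := by
      intro m M
      have h1 : Continuous fun α : Fin d → ℝ => α - m := continuous_id.sub continuous_const
      have hc : Continuous fun α : Fin d → ℝ => (α - m) ⬝ᵥ M.mulVec (α - m) :=
        h1.dotProduct (continuous_const.matrix_mulVec h1)
      have : Continuous (gaussDensity m M) := by
        unfold gaussDensity
        exact continuous_const.mul (Real.continuous_exp.comp (continuous_const.mul hc))
      exact this.measurable
    have h1 : Measurable fun α => Real.exp (l α) * gaussDensity μ Q α / gaussDensity μs Qs α :=
      ((Real.measurable_exp.comp hl).mul (hgd μ Q)).div (hgd μs Qs)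
    exact (((h1.pow measurable_const).mul (hgd μs Qs))).ennreal_ofReal
  -- the key slice computation
  have slice : ∀ x : Fin d → ℝ,
      ∫⁻ u : ℝ, ENNReal.ofReal (f (Function.update x j u)) = ⊤ := by
    intro x
    set e : Fin d → ℝ := Pi.single j 1 with he_def
    set w1 : Fin d → ℝ := Function.update x j 0 - μ with hw1_def
    set w2 : Fin d → ℝ := Function.update x j 0 - μs with hw2_def
    have hupd : ∀ u : ℝ, Function.update x j u = Function.update x j 0 + u • e := by
      intro u; funext i
      by_cases hij : i = j
      · subst hij; simp [he_def]
      · simp [Function.update_of_ne hij, he_def, Pi.single_eq_of_ne hij]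
    have hvec1 : ∀ u : ℝ, Function.update x j u - μ = w1 + u • e := by
      intro u; rw [hupd u, hw1_def]; abel
    have hvec2 : ∀ u : ℝ, Function.update x j u - μs = w2 + u • e := by
      intro u; rw [hupd u, hw2_def]; abel
    have hqpl : ∀ u : ℝ, qp (Function.update x j u)
        = w1 ⬝ᵥ Q.mulVec w1 + (w1 ⬝ᵥ Q.mulVec e + e ⬝ᵥ Q.mulVec w1) * u + Q j j * u ^ 2 := by
      intro u
      simp only [hqp_def]
      rw [hvec1 u, quad_expand_s2, he_def, single_quad]
    have hqgl : ∀ u : ℝ, qg (Function.update x j u)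
        = w2 ⬝ᵥ Qs.mulVec w2 + (w2 ⬝ᵥ Qs.mulVec e + e ⬝ᵥ Qs.mulVec w2) * u
          + Qs j j * u ^ 2 := by
      intro u
      simp only [hqg_def]
      rw [hvec2 u, quad_expand_s2, he_def, single_quad]
    obtain ⟨K1, K2, hfE⟩ : ∃ K1 K2 : ℝ, ∀ t : ℝ,
        f (Function.update x j (s * t))
          = Cg * Real.exp (n * l (Function.update x j (s * t)) + K1 + K2 * t
              + ((n - 1) * Qs j j - n * Q j j) / 2 * t ^ 2) := by
      refine ⟨n * Real.log Cp - n * Real.log Cg - n/2 * (w1 ⬝ᵥ Q.mulVec w1)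
          + (n-1)/2 * (w2 ⬝ᵥ Qs.mulVec w2),
        (-(n/2) * (w1 ⬝ᵥ Q.mulVec e + e ⬝ᵥ Q.mulVec w1)
          + (n-1)/2 * (w2 ⬝ᵥ Qs.mulVec e + e ⬝ᵥ Qs.mulVec w2)) * s, fun t => ?_⟩
      rw [key, hqpl, hqgl]
      congr 1
      rw [Real.exp_eq_exp]
      simp only [mul_pow, hs2, one_mul]
      ring
    have h0 : Tendsto (fun t : ℝ => l (Function.update x j (s * t)) / t ^ 2)
        atTop (nhds 0) := by
      simpa only [mul_pow, hs2, one_mul] using hlim x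
    have hE : Tendsto (fun t : ℝ => n * l (Function.update x j (s * t)) + K1 + K2 * t
        + ((n - 1) * Qs j j - n * Q j j) / 2 * t ^ 2) atTop atTop := by
      have hsq : Tendsto (fun t : ℝ => t ^ 2) atTop atTop :=
        tendsto_pow_atTop (by norm_num)
      have h1 : Tendsto (fun t : ℝ => (t ^ 2)⁻¹) atTop (nhds 0) :=
        hsq.inv_tendsto_atTop
      have h2 : Tendsto (fun t : ℝ => t⁻¹) atTop (nhds 0) := tendsto_inv_atTop_zero
      have hrat : Tendsto (fun t : ℝ =>
          n * (l (Function.update x j (s * t)) / t ^ 2) + K1 * (t ^ 2)⁻¹ + K2 * t⁻¹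
            + ((n - 1) * Qs j j - n * Q j j) / 2)
          atTop (nhds (n * 0 + K1 * 0 + K2 * 0 + ((n - 1) * Qs j j - n * Q j j) / 2)) :=
        (((h0.const_mul n).add (h1.const_mul K1)).add (h2.const_mul K2)).add
          tendsto_const_nhds
      rw [show n * 0 + K1 * 0 + K2 * 0 + ((n - 1) * Qs j j - n * Q j j) / 2
          = ((n - 1) * Qs j j - n * Q j j) / 2 by ring] at hrat
      have hrat' : Tendsto (fun t : ℝ =>
          (n * l (Function.update x j (s * t)) + K1 + K2 * t
            + ((n - 1) * Qs j j - n * Q j j) / 2 * t ^ 2) / t ^ 2)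
          atTop (nhds (((n - 1) * Qs j j - n * Q j j) / 2)) := by
        apply hrat.congr'
        filter_upwards [eventually_gt_atTop (0:ℝ)] with t ht
        field_simp [ht.ne']
      have hmul := Filter.Tendsto.pos_mul_atTop (half_pos hγ) hrat'
        hsq
      apply hmul.congr'
      filter_upwards [eventually_gt_atTop (0:ℝ)] with t ht
      exact div_mul_cancel₀ _ (pow_ne_zero 2 ht.ne')
    have hG : Tendsto (fun t : ℝ => f (Function.update x j (s * t))) atTop atTop := by
      have := (Real.tendsto_exp_atTop.comp hE).const_mul_atTop hCg
      exact this.congr fun t => (hfE t).symm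
    obtain ⟨T, hT⟩ := eventually_atTop.1 (hG.eventually_ge_atTop 1)
    obtain ⟨S, hSm, hSv, hSle⟩ : ∃ S : Set ℝ, MeasurableSet S ∧ volume S = ⊤ ∧
        ∀ u ∈ S, 1 ≤ f (Function.update x j u) := by
      rcases hs with h | h
      · exact ⟨Set.Ici T, measurableSet_Ici, Real.volume_Ici, fun u hu => by
          simpa [h] using hT u hu⟩
      · refine ⟨Set.Iic (-T), measurableSet_Iic, Real.volume_Iic, fun u hu => ?_⟩
        have h' := hT (-u) (le_neg.mp hu)
        simpa [h] using h'
    have hle : ∀ u : ℝ, S.indicator (fun _ => (1 : ENNReal)) u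
        ≤ ENNReal.ofReal (f (Function.update x j u)) := by
      intro u
      by_cases hu : u ∈ S
      · simpa [Set.indicator_of_mem hu] using ENNReal.one_le_ofReal.mpr (hSle u hu)
      · simp [Set.indicator_of_notMem hu]
    have h1 : volume S ≤ ∫⁻ u : ℝ, ENNReal.ofReal (f (Function.update x j u)) := by
      rw [← lintegral_indicator_one hSm]
      exact lintegral_mono hle
    rw [hSv] at h1
    exact top_le_iff.mp h1
  -- Fubini / marginal assembly
  rw [show (volume : Measure (Fin d → ℝ)) = Measure.pi fun _ => volume from volume_pi,
    lintegral_eq_lmarginal_univ (fun _ => (0:ℝ)),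
    lmarginal_erase' _ hfm (Finset.mem_univ j)]
  have hconst : (fun x : Fin d → ℝ =>
      ∫⁻ u : ℝ, ENNReal.ofReal (f (Function.update x j u))) = fun _ => (⊤ : ENNReal) :=
    funext fun x => slice x
  rw [hconst]
  simp only [MeasureTheory.lmarginal, lintegral_const]
  rw [ENNReal.top_mul]
  rw [Measure.pi_univ]
  simp only [Real.volume_univ, Finset.prod_const]
  exact pow_ne_zero _ ENNReal.top_ne_zero
end

section
/- Let d ≥ 1 and let f : ℝ^d → [0,∞) be measurable, and let g₁ and g₂ be probability densities on ℝ^d (nonnegative measurable functions integrating to 1 with respect to Lebesgue measure). Assume the support condition {α : f(α) ≠ 0} ⊆ {α : g₁(α) ≠ 0}, and assume that for some real n ≥ 1 the integral ∫_{{g₁ > 0}} (f(α)/g₁(α))^n g₁(α) dα is finite. Let 0 < π < 1 and define the mixture density g(α) = π g₁(α) + (1−π) g₂(α). Then for every real m with 1 ≤ m ≤ n, the integral ∫_{{g > 0}} (f(α)/g(α))^m g(α) dα is finite. -/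
open MeasureTheory

lemma aux_ineq (a b c π m n : ℝ) (ha : 0 ≤ a) (hb : 0 ≤ b) (hc : 0 < c)
    (hπ : 0 < π) (hcb : π * b ≤ c) (hab : a ≠ 0 → b ≠ 0)
    (hm : 1 ≤ m) (hmn : m ≤ n) :
    (a / c) ^ m * c ≤ π ^ (1 - m) * ((a / b) ^ n * b + b) := by
  rcases eq_or_ne a 0 with rfl | ha0
  · rw [zero_div, Real.zero_rpow (by linarith), zero_mul]
    positivity
  · have hb0 : 0 < b := (hab ha0).lt_of_le' hb
    have hπb : 0 < π * b := mul_pos hπ hb0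
    have h1 : (a / c) ^ m * c = a ^ m * c ^ (1 - m) := by
      rw [Real.div_rpow ha hc.le, Real.rpow_sub hc, Real.rpow_one,
        div_mul_eq_mul_div, mul_div_assoc]
    have h1' : (a / b) ^ m * b = a ^ m * b ^ (1 - m) := by
      rw [Real.div_rpow ha hb0.le, Real.rpow_sub hb0, Real.rpow_one,
        div_mul_eq_mul_div, mul_div_assoc]
    have h2 : c ^ (1 - m) ≤ (π * b) ^ (1 - m) :=
      Real.rpow_le_rpow_of_nonpos hπb hcb (by linarith)
    have h3 : (a / c) ^ m * c ≤ π ^ (1 - m) * ((a / b) ^ m * b) := by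
      rw [h1, h1']
      calc a ^ m * c ^ (1 - m) ≤ a ^ m * (π * b) ^ (1 - m) := by
            apply mul_le_mul_of_nonneg_left h2 (Real.rpow_nonneg ha m)
        _ = π ^ (1 - m) * (a ^ m * b ^ (1 - m)) := by
            rw [Real.mul_rpow hπ.le hb0.le]; ring
    refine h3.trans (mul_le_mul_of_nonneg_left ?_ (Real.rpow_nonneg hπ.le _))
    have h4 : (a / b) ^ m ≤ (a / b) ^ n + 1 := by
      rcases le_total (a / b) 1 with h | h
      · have := Real.rpow_le_one (by positivity) h (by linarith : (0:ℝ) ≤ m)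
        have : (0:ℝ) ≤ (a / b) ^ n := Real.rpow_nonneg (by positivity) n
        linarith [Real.rpow_le_one (show 0 ≤ a/b by positivity) h (by linarith : (0:ℝ) ≤ m)]
      · have := Real.rpow_le_rpow_of_exponent_le h hmn
        linarith
    calc (a / b) ^ m * b ≤ ((a / b) ^ n + 1) * b :=
          mul_le_mul_of_nonneg_right h4 hb
      _ = (a / b) ^ n * b + b := by ring

theorem stmt3 (d : ℕ) (hd : 1 ≤ d)
    (f : (Fin d → ℝ) → ℝ) (hf : Measurable f) (hf0 : ∀ α, 0 ≤ f α)
    (g₁ g₂ : (Fin d → ℝ) → ℝ)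
    (hg₁meas : Measurable g₁) (hg₁0 : ∀ α, 0 ≤ g₁ α) (hg₁int : ∫ α, g₁ α = 1)
    (hg₂meas : Measurable g₂) (hg₂0 : ∀ α, 0 ≤ g₂ α) (hg₂int : ∫ α, g₂ α = 1)
    (hsupp : {α | f α ≠ 0} ⊆ {α | g₁ α ≠ 0})
    (n : ℝ) (hn : 1 ≤ n)
    (hfin : ∫⁻ α in {α | 0 < g₁ α},
      ENNReal.ofReal ((f α / g₁ α) ^ n * g₁ α) < ⊤)
    (π : ℝ) (hπ0 : 0 < π) (hπ1 : π < 1) :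
    ∀ m : ℝ, 1 ≤ m → m ≤ n →
      ∫⁻ α in {α | 0 < π * g₁ α + (1 - π) * g₂ α},
        ENNReal.ofReal ((f α / (π * g₁ α + (1 - π) * g₂ α)) ^ m *
          (π * g₁ α + (1 - π) * g₂ α)) < ⊤ := by
  intro m hm1 hmn
  have hg₁integrable : Integrable g₁ := by
    by_contra h
    rw [integral_undef h] at hg₁int
    norm_num at hg₁int
  set A : (Fin d → ℝ) → ℝ := fun α => (f α / g₁ α) ^ n * g₁ α with hA
  have hAmeas : Measurable A := ((Real.continuous_rpow_const (le_trans zero_le_one hn)).measurable.comp (hf.div hg₁meas)).mul hg₁meas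
  have hA0 : ∀ α, 0 ≤ A α := fun α =>
    mul_nonneg (Real.rpow_nonneg (div_nonneg (hf0 α) (hg₁0 α)) n) (hg₁0 α)
  -- pointwise bound
  have key : ∀ α ∈ {α | 0 < π * g₁ α + (1 - π) * g₂ α},
      ENNReal.ofReal ((f α / (π * g₁ α + (1 - π) * g₂ α)) ^ m *
          (π * g₁ α + (1 - π) * g₂ α)) ≤
      ENNReal.ofReal (π ^ (1 - m)) * (ENNReal.ofReal (A α) + ENNReal.ofReal (g₁ α)) := by
    intro α hα
    rw [← ENNReal.ofReal_add (hA0 α) (hg₁0 α),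
      ← ENNReal.ofReal_mul (Real.rpow_nonneg hπ0.le _)]
    apply ENNReal.ofReal_le_ofReal
    refine aux_ineq (f α) (g₁ α) _ π m n (hf0 α) (hg₁0 α) hα hπ0 ?_ ?_ hm1 hmn
    · nlinarith [hg₂0 α, hg₁0 α]
    · intro h; exact hsupp h
  have hSmeas : MeasurableSet {α | 0 < π * g₁ α + (1 - π) * g₂ α} :=
    measurableSet_lt measurable_const ((hg₁meas.const_mul π).add (hg₂meas.const_mul (1 - π)))
  have step1 : ∫⁻ α in {α | 0 < π * g₁ α + (1 - π) * g₂ α},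
        ENNReal.ofReal ((f α / (π * g₁ α + (1 - π) * g₂ α)) ^ m *
          (π * g₁ α + (1 - π) * g₂ α)) ≤
      ∫⁻ α, ENNReal.ofReal (π ^ (1 - m)) * (ENNReal.ofReal (A α) + ENNReal.ofReal (g₁ α)) := by
    refine le_trans (setLIntegral_mono ?_ key) (setLIntegral_le_lintegral _ _)
    exact measurable_const.mul (hAmeas.ennreal_ofReal.add hg₁meas.ennreal_ofReal)
  refine lt_of_le_of_lt step1 ?_
  rw [lintegral_const_mul' _ _ ENNReal.ofReal_ne_top,
    lintegral_add_left hAmeas.ennreal_ofReal]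
  have hAint : ∫⁻ α, ENNReal.ofReal (A α) = ∫⁻ α in {α | 0 < g₁ α}, ENNReal.ofReal (A α) := by
    have hs : MeasurableSet {α | 0 < g₁ α} := measurableSet_lt measurable_const hg₁meas
    rw [← lintegral_add_compl (fun α => ENNReal.ofReal (A α)) hs]
    have hzero : ∫⁻ α in {α | 0 < g₁ α}ᶜ, ENNReal.ofReal (A α) = 0 := by
      have heq : ∫⁻ α in {α | 0 < g₁ α}ᶜ, ENNReal.ofReal (A α)
          = ∫⁻ _ in {α | 0 < g₁ α}ᶜ, (0 : ENNReal) :=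
        setLIntegral_congr_fun hs.compl (fun α hα => by
          have : g₁ α = 0 := le_antisymm (not_lt.mp hα) (hg₁0 α)
          simp [hA, this])
      rw [heq, lintegral_zero]
    rw [hzero, add_zero]
  have hg₁lint : ∫⁻ α, ENNReal.ofReal (g₁ α) = 1 := by
    rw [← ofReal_integral_eq_lintegral_ofReal hg₁integrable (ae_of_all _ hg₁0), hg₁int,
      ENNReal.ofReal_one]
  rw [hAint, hg₁lint]
  exact ENNReal.mul_lt_top ENNReal.ofReal_lt_top (ENNReal.add_lt_top.mpr ⟨hfin, ENNReal.one_lt_top⟩)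
end

section
/- Let T ≥ 2, let φ ∈ ℝ with 0 < |φ| < 1, let σ > 0, let n ≥ 1 be real, and let v > 0 satisfy v ≥ (n−1)σ²/(1−|φ|)². Then the T×T symmetric tridiagonal matrix M with diagonal entries M_{11} = M_{TT} = σ⁻²(1 − (n−1)σ²/v), M_{tt} = σ⁻²(1 + φ² − (n−1)σ²/v) for 2 ≤ t ≤ T−1, off-diagonal entries M_{t,t+1} = M_{t+1,t} = −φ/σ², and all other entries zero, is positive definite. -/
open Matrix Finset

theorem stmt5 (T : ℕ) (hT : 2 ≤ T) (φ : ℝ) (hφ0 : φ ≠ 0) (hφ1 : |φ| < 1)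
    (σ : ℝ) (hσ : 0 < σ) (n : ℝ) (hn : 1 ≤ n)
    (v : ℝ) (hv : 0 < v) (hvge : (n - 1) * σ ^ 2 / (1 - |φ|) ^ 2 ≤ v)
    (M : Matrix (Fin T) (Fin T) ℝ)
    (hM : M = Matrix.of fun i j =>
      if i = j then
        (if i.val = 0 ∨ i.val = T - 1 then σ⁻¹ ^ 2 * (1 - (n - 1) * σ ^ 2 / v)
         else σ⁻¹ ^ 2 * (1 + φ ^ 2 - (n - 1) * σ ^ 2 / v))
      else if i.val + 1 = j.val ∨ j.val + 1 = i.val then -φ / σ ^ 2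
      else 0) :
    M.PosDef := by
  set c : ℝ := (n - 1) * σ ^ 2 / v with hcdef
  set a : ℝ := |φ| with hadef
  have ha0 : 0 < a := abs_pos.mpr hφ0
  have ha1 : a < 1 := hφ1
  have hc0 : 0 ≤ c := div_nonneg (mul_nonneg (by linarith) (sq_nonneg σ)) hv.le
  have hca : c ≤ (1 - a) ^ 2 := by
    have h1a : (0:ℝ) < (1 - a) ^ 2 := pow_pos (by linarith) 2
    have h2 := (div_le_iff₀ h1a).mp hvge
    rw [hcdef, div_le_iff₀ hv]
    nlinarith
  set L : ℕ := T - 1 with hLdef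
  have hTL : T = L + 1 := by omega
  have hL1 : 1 ≤ L := by omega
  rw [posDef_iff_dotProduct_mulVec]
  constructor
  · -- symmetry
    rw [IsHermitian, hM]
    ext i j
    simp only [conjTranspose_apply, of_apply, star_trivial]
    by_cases hij : j = i
    · subst hij; rfl
    · rw [if_neg hij, if_neg (fun h : i = j => hij h.symm)]
      by_cases h2 : (i:ℕ) + 1 = (j:ℕ) ∨ (j:ℕ) + 1 = (i:ℕ)
      · rw [if_pos h2.symm, if_pos h2]
      · rw [if_neg (fun hh : (j:ℕ) + 1 = (i:ℕ) ∨ (i:ℕ) + 1 = (j:ℕ) => h2 hh.symm),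
          if_neg h2]
  · intro x hx
    set z : ℕ → ℝ := fun t => if h : t < T then x ⟨t, h⟩ else 0 with hzdef
    set y : ℕ → ℝ := fun t => |z t| with hydef
    set d : ℕ → ℝ := fun i => if i = 0 ∨ i = L then σ⁻¹ ^ 2 * (1 - c)
      else σ⁻¹ ^ 2 * (1 + φ ^ 2 - c) with hddef
    set e : ℝ := -φ / σ ^ 2 with hedef
    have hzx : ∀ i : Fin T, z i.val = x i := by
      intro i; simp [hzdef, i.isLt]
    have hzT : ∀ t, T ≤ t → z t = 0 := by
      intro t ht; simp [hzdef, Nat.not_lt.mpr ht]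
    -- Step A : quadratic form as double range-sum
    have stepA : star x ⬝ᵥ M *ᵥ x =
        ∑ i ∈ range T, ∑ j ∈ range T,
          ((if j = i then d i * z i ^ 2 else 0) +
           ((if j = i + 1 then e * (z i * z j) else 0) +
            (if i = j + 1 then e * (z i * z j) else 0))) := by
      rw [hM]
      simp only [dotProduct, mulVec, dotProduct, star_trivial, Pi.star_apply]
      rw [← Fin.sum_univ_eq_sum_range (fun i => ∑ j ∈ range T,
          ((if j = i then d i * z i ^ 2 else 0) +
           ((if j = i + 1 then e * (z i * z j) else 0) +
            (if i = j + 1 then e * (z i * z j) else 0))))]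
      refine Finset.sum_congr rfl fun i _ => ?_
      rw [← Fin.sum_univ_eq_sum_range (fun j =>
          ((if j = (i:ℕ) then d i * z i ^ 2 else 0) +
           ((if j = (i:ℕ) + 1 then e * (z i * z j) else 0) +
            (if (i:ℕ) = j + 1 then e * (z i * z j) else 0)))), Finset.mul_sum]
      refine Finset.sum_congr rfl fun j _ => ?_
      simp only [of_apply]
      rw [← hzx i, ← hzx j]
      by_cases hij : (i:ℕ) = (j:ℕ)
      · obtain rfl : i = j := Fin.ext hij
        rw [if_pos rfl, if_pos rfl]
        simp only [hddef]
        split_ifs <;> first | ring1 | (exfalso; omega)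
      · have hij' : i ≠ j := fun h => hij (congrArg Fin.val h)
        rw [if_neg hij', if_neg (fun h : (j:ℕ) = (i:ℕ) => hij h.symm)]
        by_cases h2 : (i:ℕ) + 1 = (j:ℕ)
        · rw [if_pos (Or.inl h2), if_pos h2.symm,
            if_neg (by omega : ¬((i:ℕ) = (j:ℕ) + 1))]; ring
        · by_cases h3 : (j:ℕ) + 1 = (i:ℕ)
          · rw [if_pos (Or.inr h3), if_neg (by omega : ¬((j:ℕ) = (i:ℕ) + 1)),
              if_pos h3.symm]; ring
          · rw [if_neg (not_or.mpr ⟨h2, h3⟩),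
              if_neg (by omega : ¬((j:ℕ) = (i:ℕ) + 1)),
              if_neg (by omega : ¬((i:ℕ) = (j:ℕ) + 1))]
            ring
    set Pz : ℝ := ∑ t ∈ range T, z t ^ 2 with hPzdef
    set Wz : ℝ := ∑ t ∈ range L, z t * z (t + 1) with hWzdef
    set Wy : ℝ := ∑ t ∈ range L, y t * y (t + 1) with hWydef
    set D : ℝ := ∑ t ∈ range L, (y t - y (t + 1)) ^ 2 with hDdef
    -- expand the double sum
    have expand : star x ⬝ᵥ M *ᵥ x =
        (∑ i ∈ range T, ∑ j ∈ range T, (if j = i then d i * z i ^ 2 else 0)) +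
        ((∑ i ∈ range T, ∑ j ∈ range T, (if j = i + 1 then e * (z i * z j) else 0)) +
         (∑ i ∈ range T, ∑ j ∈ range T, (if i = j + 1 then e * (z i * z j) else 0))) := by
      rw [stepA]
      simp only [Finset.sum_add_distrib]
    -- diagonal part
    have hS1 : (∑ i ∈ range T, ∑ j ∈ range T, (if j = i then d i * z i ^ 2 else 0))
        = σ⁻¹ ^ 2 * ((1 + φ ^ 2 - c) * Pz - φ ^ 2 * (z 0 ^ 2 + z L ^ 2)) := by
      have h1 : (∑ i ∈ range T, ∑ j ∈ range T, (if j = i then d i * z i ^ 2 else 0))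
          = ∑ i ∈ range T, d i * z i ^ 2 := by
        refine Finset.sum_congr rfl fun i hi => ?_
        rw [Finset.sum_ite_eq' (range T) i (fun _ => d i * z i ^ 2), if_pos hi]
      rw [h1]
      have h2 : ∀ i ∈ range T, d i * z i ^ 2 =
          σ⁻¹ ^ 2 * (1 + φ ^ 2 - c) * z i ^ 2 -
          ((if i = 0 then σ⁻¹ ^ 2 * φ ^ 2 * z i ^ 2 else 0) +
           (if i = L then σ⁻¹ ^ 2 * φ ^ 2 * z i ^ 2 else 0)) := by
        intro i _
        simp only [hddef]
        split_ifs <;> first | ring1 | (exfalso; omega)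
      rw [Finset.sum_congr rfl h2, Finset.sum_sub_distrib, Finset.sum_add_distrib]
      rw [Finset.sum_ite_eq' (range T) 0 (fun i => σ⁻¹ ^ 2 * φ ^ 2 * z i ^ 2),
        if_pos (Finset.mem_range.mpr (by omega : 0 < T)),
        Finset.sum_ite_eq' (range T) L (fun i => σ⁻¹ ^ 2 * φ ^ 2 * z i ^ 2),
        if_pos (Finset.mem_range.mpr (by omega : L < T))]
      have h3 : ∑ i ∈ range T, σ⁻¹ ^ 2 * (1 + φ ^ 2 - c) * z i ^ 2
          = σ⁻¹ ^ 2 * (1 + φ ^ 2 - c) * Pz := by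
        rw [hPzdef]; exact (Finset.mul_sum _ _ _).symm
      rw [h3]; ring
    -- superdiagonal part
    have hS2 : (∑ i ∈ range T, ∑ j ∈ range T, (if j = i + 1 then e * (z i * z j) else 0))
        = e * Wz := by
      have h1 : ∀ i ∈ range T,
          (∑ j ∈ range T, (if j = i + 1 then e * (z i * z j) else 0))
            = e * (z i * z (i + 1)) := by
        intro i _
        rw [Finset.sum_ite_eq' (range T) (i + 1) (fun j => e * (z i * z j))]
        split_ifs with h
        · rfl
        · rw [hzT (i + 1) (by simpa using h)]; ring
      rw [Finset.sum_congr rfl h1, hTL, Finset.sum_range_succ,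
        hzT (L + 1) (by omega), hWzdef, Finset.mul_sum]
      rw [show e * (z L * 0) = 0 by ring, add_zero]
    -- subdiagonal part
    have hS3 : (∑ i ∈ range T, ∑ j ∈ range T, (if i = j + 1 then e * (z i * z j) else 0))
        = e * Wz := by
      rw [Finset.sum_comm]
      have h1 : ∀ j ∈ range T,
          (∑ i ∈ range T, (if i = j + 1 then e * (z i * z j) else 0))
            = e * (z j * z (j + 1)) := by
        intro j _
        rw [Finset.sum_ite_eq' (range T) (j + 1) (fun i => e * (z i * z j))]
        split_ifs with h
        · ring
        · rw [hzT (j + 1) (by simpa using h)]; ring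
      rw [Finset.sum_congr rfl h1, hTL, Finset.sum_range_succ,
        hzT (L + 1) (by omega), hWzdef, Finset.mul_sum]
      rw [show e * (z L * 0) = 0 by ring, add_zero]
    -- the quadratic form equals σ⁻² * F
    have hQF : star x ⬝ᵥ M *ᵥ x =
        σ⁻¹ ^ 2 * ((1 + φ ^ 2 - c) * Pz - φ ^ 2 * (z 0 ^ 2 + z L ^ 2) - 2 * φ * Wz) := by
      rw [expand, hS1, hS2, hS3, hedef]; ring
    rw [hQF]
    have hσ2 : (0:ℝ) < σ⁻¹ ^ 2 := pow_pos (inv_pos.mpr hσ) 2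
    refine mul_pos hσ2 ?_
    -- bounds in terms of absolute values
    have hysq : ∀ t, y t ^ 2 = z t ^ 2 := fun t => by simp only [hydef]; exact sq_abs _
    have haa : a ^ 2 = φ ^ 2 := by rw [hadef]; exact sq_abs φ
    have hWyz : φ * Wz ≤ a * Wy := by
      rw [hWzdef, hWydef, Finset.mul_sum, Finset.mul_sum]
      refine Finset.sum_le_sum fun t _ => ?_
      calc φ * (z t * z (t + 1)) ≤ |φ * (z t * z (t + 1))| := le_abs_self _
        _ = a * (y t * y (t + 1)) := by
            simp only [hydef, hadef, abs_mul]
    -- key sum identities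
    have hPyL : ∑ t ∈ range L, y t ^ 2 = Pz - y L ^ 2 := by
      have : Pz = (∑ t ∈ range L, y t ^ 2) + y L ^ 2 := by
        rw [hPzdef, hTL, Finset.sum_range_succ, hysq]
        exact congrArg (· + z L ^ 2) (Finset.sum_congr rfl fun t _ => (hysq t).symm)
      linarith
    have hPy0 : ∑ t ∈ range L, y (t + 1) ^ 2 = Pz - y 0 ^ 2 := by
      have : Pz = (∑ t ∈ range L, y (t + 1) ^ 2) + y 0 ^ 2 := by
        rw [hPzdef, hTL, Finset.sum_range_succ', hysq]
        exact congrArg (· + z 0 ^ 2) (Finset.sum_congr rfl fun t _ => (hysq (t + 1)).symm)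
      linarith
    have hD : D = (Pz - y L ^ 2) + (Pz - y 0 ^ 2) - 2 * Wy := by
      have h1 : D = (∑ t ∈ range L, y t ^ 2) + (∑ t ∈ range L, y (t + 1) ^ 2)
          - 2 * Wy := by
        rw [hDdef, hWydef, Finset.mul_sum, ← Finset.sum_add_distrib,
          ← Finset.sum_sub_distrib]
        exact Finset.sum_congr rfl fun t _ => by ring
      rw [h1, hPyL, hPy0]
    -- lower bound
    have hid : ((1 - a) ^ 2 - c) * Pz + a * (1 - a) * (y 0 ^ 2 + y L ^ 2) + a * D
        = (1 + φ ^ 2 - c) * Pz - φ ^ 2 * (z 0 ^ 2 + z L ^ 2) - 2 * a * Wy := by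
      rw [← hysq 0, ← hysq L, ← haa]
      linear_combination a * hD
    have hge : ((1 - a) ^ 2 - c) * Pz + a * (1 - a) * (y 0 ^ 2 + y L ^ 2) + a * D
        ≤ (1 + φ ^ 2 - c) * Pz - φ ^ 2 * (z 0 ^ 2 + z L ^ 2) - 2 * φ * Wz := by
      rw [hid]; linarith
    -- positivity of the lower bound
    have hPz0 : 0 ≤ Pz := by
      rw [hPzdef]; exact Finset.sum_nonneg fun t _ => sq_nonneg _
    have hD0 : 0 ≤ D := by
      rw [hDdef]; exact Finset.sum_nonneg fun t _ => sq_nonneg _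
    have ht1 : 0 ≤ ((1 - a) ^ 2 - c) * Pz := mul_nonneg (by linarith) hPz0
    obtain ⟨i0, hi0⟩ := Function.ne_iff.mp hx
    have hzi0 : z i0.val ≠ 0 := by rw [hzx]; exact hi0
    by_cases h0 : z 0 = 0
    · -- some consecutive difference is nonzero
      have hex : ∃ t ∈ range L, y t ≠ y (t + 1) := by
        by_contra hcon
        push_neg at hcon
        have hall : ∀ k, k < T → y k = 0 := by
          intro k
          induction k with
          | zero => intro _; simp [hydef, h0]
          | succ m ih =>
            intro hk
            rw [← hcon m (Finset.mem_range.mpr (by omega))]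
            exact ih (by omega)
        exact hzi0 (abs_eq_zero.mp (by
          have := hall i0.val i0.isLt
          simpa [hydef] using this))
      obtain ⟨t0, ht0, hne⟩ := hex
      have hDpos : 0 < D := by
        rw [hDdef]
        refine Finset.sum_pos' (fun t _ => sq_nonneg _) ⟨t0, ht0, ?_⟩
        exact lt_of_le_of_ne (sq_nonneg _)
          (Ne.symm (pow_ne_zero 2 (sub_ne_zero.mpr hne)))
      have ht2 : 0 ≤ a * (1 - a) * (y 0 ^ 2 + y L ^ 2) :=
        mul_nonneg (mul_nonneg ha0.le (by linarith)) (by positivity)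
      have ht3 : 0 < a * D := mul_pos ha0 hDpos
      linarith
    · have hy0pos : 0 < y 0 := by
        simp only [hydef]; exact abs_pos.mpr h0
      have ht2 : 0 < a * (1 - a) * (y 0 ^ 2 + y L ^ 2) :=
        mul_pos (mul_pos ha0 (by linarith))
          (add_pos_of_pos_of_nonneg (pow_pos hy0pos 2) (sq_nonneg _))
      have ht3 : 0 ≤ a * D := mul_nonneg ha0.le hD0
      linarith
end

section
/- Let φ ∈ ℝ with 0 < |φ| < 1 and let c ∈ ℝ with c > 2|φ|. Define the sequence (Λ_t)_{t≥0} by Λ_0 = 1, Λ_1 = c − φ², and Λ_t = c Λ_{t−1} − φ² Λ_{t−2} for t ≥ 2. Then Λ_t > 0 for every t ≥ 0, and moreover Λ_T − φ² Λ_{T−1} > 0 for every T ≥ 1. -/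
theorem stmt8 (φ : ℝ) (hφ0 : 0 < |φ|) (hφ1 : |φ| < 1)
    (c : ℝ) (hc : 2 * |φ| < c)
    (Λ : ℕ → ℝ) (hΛ0 : Λ 0 = 1) (hΛ1 : Λ 1 = c - φ ^ 2)
    (hΛ : ∀ t, 2 ≤ t → Λ t = c * Λ (t - 1) - φ ^ 2 * Λ (t - 2)) :
    (∀ t : ℕ, 0 < Λ t) ∧ (∀ T : ℕ, 1 ≤ T → 0 < Λ T - φ ^ 2 * Λ (T - 1)) := by
  have hsq : φ ^ 2 = |φ| ^ 2 := (sq_abs φ).symm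
  have key : ∀ t : ℕ, 0 < Λ t ∧ |φ| * Λ t < Λ (t + 1) := by
    intro t
    induction t with
    | zero =>
      constructor
      · rw [hΛ0]; norm_num
      · rw [hΛ0, hΛ1, hsq]; nlinarith
    | succ n ih =>
      obtain ⟨hpos, hlt⟩ := ih
      have hpos' : 0 < Λ (n + 1) := lt_trans (by positivity) hlt
      have hrec : Λ (n + 2) = c * Λ (n + 1) - φ ^ 2 * Λ n := by
        have := hΛ (n + 2) (by omega)
        simpa using this
      refine ⟨hpos', ?_⟩
      rw [hrec, hsq]
      nlinarith [mul_lt_mul_of_pos_left hlt hφ0]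
  constructor
  · intro t; exact (key t).1
  · intro T hT
    obtain ⟨t, rfl⟩ : ∃ t, T = t + 1 := ⟨T - 1, by omega⟩
    obtain ⟨hpos, hlt⟩ := key t
    simp only [Nat.add_sub_cancel]
    rw [hsq]
    nlinarith [mul_pos hpos (mul_pos hφ0 (sub_pos.mpr hφ1))]
end

section
/- Let d ≥ 1 and let l : ℝ^d → ℝ be measurable with l(α) ≤ k + δᵀα for all α, for some k ∈ ℝ and δ ∈ ℝ^d. Let Q and Q̃ be symmetric positive definite d×d matrices, let μ, μ* ∈ ℝ^d, and define the target f(α) = exp(l(α))·N(α|μ, Q⁻¹). Let n ≥ 1 be real and assume Q̃ − n(Q̃ − Q) ≻ 0. Let g₁(α) = N(α|μ*, Q̃⁻¹), let g₂ be any probability density on ℝ^d, let 0 < π < 1, and define the mixture importance density g(α) = π g₁(α) + (1−π) g₂(α). Then g(α) > 0 for all α, and for every real m with 1 ≤ m ≤ n the integral ∫_{ℝ^d} (f(α)/g(α))^m g(α) dα is finite. -/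
open MeasureTheory Matrix

private lemma aux_quad_lb {d : ℕ} (hd : 1 ≤ d) {M : Matrix (Fin d) (Fin d) ℝ} (hM : M.PosDef) :
    ∃ ε > 0, ∀ x : Fin d → ℝ, ε * (∑ i, x i ^ 2) ≤ x ⬝ᵥ M.mulVec x := by
  have hφ : Continuous fun x : Fin d → ℝ => x ⬝ᵥ M.mulVec x := by
    simp only [dotProduct, Matrix.mulVec]
    fun_prop
  have hpos : ∀ x : Fin d → ℝ, x ≠ 0 → 0 < x ⬝ᵥ M.mulVec x := by
    intro x hx; simpa using hM.dotProduct_mulVec_pos hx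
  set S : Set (Fin d → ℝ) := {x | ∑ i, x i ^ 2 = 1} with hS
  have hcont : Continuous fun x : Fin d → ℝ => ∑ i, x i ^ 2 := by fun_prop
  have hSclosed : IsClosed S := isClosed_eq hcont continuous_const
  have hSbdd : Bornology.IsBounded S := by
    rw [Metric.isBounded_iff_subset_closedBall 0]
    refine ⟨1, fun x hx => ?_⟩
    simp only [Metric.mem_closedBall, dist_zero_right]
    rw [pi_norm_le_iff_of_nonneg zero_le_one]
    intro i
    rw [Real.norm_eq_abs, abs_le_one_iff_mul_self_le_one, ← sq]
    calc x i ^ 2 ≤ ∑ j, x j ^ 2 :=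
          Finset.single_le_sum (fun j _ => sq_nonneg (x j)) (Finset.mem_univ i)
      _ = 1 := hx
  have hScompact : IsCompact S := Metric.isCompact_of_isClosed_isBounded hSclosed hSbdd
  have hSne : S.Nonempty := by
    refine ⟨fun i => if i = ⟨0, hd⟩ then 1 else 0, ?_⟩
    simp [hS, Finset.sum_ite_eq', sq]
  obtain ⟨x₀, hx₀S, hx₀min⟩ := hScompact.exists_isMinOn hSne hφ.continuousOn
  have hx₀ne : x₀ ≠ 0 := by
    intro h
    rw [h] at hx₀S
    simp [hS] at hx₀S
  refine ⟨x₀ ⬝ᵥ M.mulVec x₀, hpos x₀ hx₀ne, fun x => ?_⟩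
  by_cases hx : x = 0
  · simp [hx]
  · set r : ℝ := Real.sqrt (∑ i, x i ^ 2) with hr
    have hsum : 0 < ∑ i, x i ^ 2 := by
      have : ∃ i, x i ≠ 0 := by
        by_contra h; push_neg at h; exact hx (funext h)
      obtain ⟨i, hi⟩ := this
      exact Finset.sum_pos' (fun j _ => sq_nonneg _) ⟨i, Finset.mem_univ i, by positivity⟩
    have hrpos : 0 < r := Real.sqrt_pos.2 hsum
    have hr2 : r ^ 2 = ∑ i, x i ^ 2 := Real.sq_sqrt hsum.le
    have hyS : (r⁻¹ • x) ∈ S := by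
      simp only [hS, Set.mem_setOf_eq, Pi.smul_apply, smul_eq_mul, mul_pow, ← Finset.mul_sum]
      rw [← hr2]
      field_simp
    have := hx₀min hyS
    have hval : (r⁻¹ • x) ⬝ᵥ M.mulVec (r⁻¹ • x) = r⁻¹ * (r⁻¹ * (x ⬝ᵥ M.mulVec x)) := by
      rw [Matrix.mulVec_smul, smul_dotProduct, dotProduct_smul]
      simp [smul_eq_mul]
    rw [Set.mem_setOf_eq] at this
    simp only [isMinOn_iff] at hx₀min
    have h2 := hx₀min _ hyS
    rw [hval] at h2
    have : (x₀ ⬝ᵥ M.mulVec x₀) * r ^ 2 ≤ x ⬝ᵥ M.mulVec x := by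
      rw [sq]
      calc (x₀ ⬝ᵥ M.mulVec x₀) * (r * r) ≤ (r⁻¹ * (r⁻¹ * (x ⬝ᵥ M.mulVec x))) * (r * r) := by
            nlinarith [hrpos]
        _ = x ⬝ᵥ M.mulVec x := by field_simp
    linarith [hr2 ▸ this]

private lemma aux_expand {d : ℕ} {M : Matrix (Fin d) (Fin d) ℝ} (hM : M.IsHermitian)
    (x y : Fin d → ℝ) :
    (x - y) ⬝ᵥ M.mulVec (x - y)
      = x ⬝ᵥ M.mulVec x - 2 * (M.mulVec y ⬝ᵥ x) + y ⬝ᵥ M.mulVec y := by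
  have hMt : Mᵀ = M := by
    have := hM.eq
    rwa [Matrix.conjTranspose_eq_transpose_of_trivial] at this
  have hsym : ∀ u v : Fin d → ℝ, u ⬝ᵥ M.mulVec v = M.mulVec u ⬝ᵥ v := by
    intro u v
    rw [Matrix.dotProduct_mulVec, ← Matrix.mulVec_transpose, hMt]
  rw [Matrix.mulVec_sub, sub_dotProduct, dotProduct_sub, dotProduct_sub,
    hsym x y, show M.mulVec x ⬝ᵥ y = M.mulVec y ⬝ᵥ x from by
      rw [dotProduct_comm, hsym y x]]
  linarith [hsym y x]

private lemma aux_integrable {d : ℕ} (b : ℝ) (hb : 0 < b) (w : Fin d → ℝ) :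
    Integrable (fun x : Fin d → ℝ => Real.exp (-b * ∑ i, x i ^ 2 + ∑ i, w i * x i)) := by
  have h := GaussianFourier.integrable_cexp_neg_mul_sum_add (b := (b : ℂ))
    (by simpa using hb) (fun i => (w i : ℂ))
  refine h.re.congr (Filter.Eventually.of_forall fun x => ?_)
  have hz : (-(b : ℂ) * ∑ i, (x i : ℂ) ^ 2 + ∑ i, (w i : ℂ) * (x i : ℂ))
      = ((-b * ∑ i, x i ^ 2 + ∑ i, w i * x i : ℝ) : ℂ) := by
    push_cast; ring
  dsimp only
  rw [hz, ← Complex.ofReal_exp]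
  exact Complex.ofReal_re _

theorem stmt18 (d : ℕ) (hd : 1 ≤ d)
    (l : (Fin d → ℝ) → ℝ) (hl : Measurable l)
    (k : ℝ) (δ : Fin d → ℝ) (hbound : ∀ α, l α ≤ k + δ ⬝ᵥ α)
    (Q Qt : Matrix (Fin d) (Fin d) ℝ) (hQ : Q.PosDef) (hQt : Qt.PosDef)
    (μ μs : Fin d → ℝ)
    (f : (Fin d → ℝ) → ℝ) (hf : f = fun α => Real.exp (l α) * gaussDensity μ Q α)
    (n : ℝ) (hn : 1 ≤ n)
    (hpd : (Qt - n • (Qt - Q)).PosDef)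
    (g₂ : (Fin d → ℝ) → ℝ) (hg₂meas : Measurable g₂) (hg₂0 : ∀ α, 0 ≤ g₂ α)
    (hg₂int : ∫ α, g₂ α = 1)
    (π : ℝ) (hπ0 : 0 < π) (hπ1 : π < 1)
    (g : (Fin d → ℝ) → ℝ)
    (hg : g = fun α => π * gaussDensity μs Qt α + (1 - π) * g₂ α) :
    (∀ α, 0 < g α) ∧
    ∀ m : ℝ, 1 ≤ m → m ≤ n →
      ∫⁻ α, ENNReal.ofReal ((f α / g α) ^ m * g α) < ⊤ := by
  have hgauss_pos : ∀ (ν : Fin d → ℝ) (P : Matrix (Fin d) (Fin d) ℝ), P.PosDef →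
      ∀ α, 0 < gaussDensity ν P α := by
    intro ν P hP α
    unfold gaussDensity
    have h1 : (0:ℝ) < (2 * Real.pi) ^ (-(d : ℝ) / 2) :=
      Real.rpow_pos_of_pos (by positivity) _
    have h2 : (0:ℝ) < Real.sqrt P.det := Real.sqrt_pos.2 hP.det_pos
    positivity
  have hgpos : ∀ α, 0 < g α := by
    intro α
    rw [hg]
    show 0 < π * gaussDensity μs Qt α + (1 - π) * g₂ α
    have h1 := hgauss_pos μs Qt hQt α
    have h2 := hg₂0 α
    nlinarith [mul_pos hπ0 h1, mul_nonneg (by linarith : (0:ℝ) ≤ 1 - π) h2]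
  refine ⟨hgpos, fun m hm1 hmn => ?_⟩
  have hm0 : (0:ℝ) ≤ m := by linarith
  -- lower bound on the quadratic form m * Q - (m-1) * Qt
  obtain ⟨ε₁, hε₁, hQlb⟩ := aux_quad_lb hd hQ
  obtain ⟨ε₂, hε₂, hBlb⟩ := aux_quad_lb hd hpd
  have hBval : ∀ x : Fin d → ℝ,
      x ⬝ᵥ (Qt - n • (Qt - Q)).mulVec x
        = x ⬝ᵥ Qt.mulVec x - n * (x ⬝ᵥ Qt.mulVec x - x ⬝ᵥ Q.mulVec x) := by
    intro x
    rw [Matrix.sub_mulVec, dotProduct_sub, Matrix.smul_mulVec, dotProduct_smul,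
      Matrix.sub_mulVec, dotProduct_sub]
    simp [smul_eq_mul]
  have hquad : ∃ ε > 0, ∀ x : Fin d → ℝ,
      ε * (∑ i, x i ^ 2) ≤ m * (x ⬝ᵥ Q.mulVec x) - (m - 1) * (x ⬝ᵥ Qt.mulVec x) := by
    by_cases hn1 : n = 1
    · have hm : m = 1 := le_antisymm (hn1 ▸ hmn) hm1
      exact ⟨ε₁, hε₁, fun x => by rw [hm]; linarith [hQlb x]⟩
    · have hn1' : 1 < n := lt_of_le_of_ne hn (Ne.symm hn1)
      set t : ℝ := (m - 1) / (n - 1) with ht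
      have ht0 : 0 ≤ t := div_nonneg (by linarith) (by linarith)
      have ht1 : t ≤ 1 := by
        rw [div_le_one (by linarith)]; linarith
      have htn : t * (n - 1) = m - 1 := by
        rw [ht]
        exact div_mul_cancel₀ _ (ne_of_gt (by linarith))
      set ε₀ : ℝ := min ε₁ ε₂ with hε₀
      refine ⟨(1 - t) * ε₁ + t * ε₂, ?_, fun x => ?_⟩
      · nlinarith [mul_le_mul_of_nonneg_left (min_le_left ε₁ ε₂) (sub_nonneg.2 ht1),
          mul_le_mul_of_nonneg_left (min_le_right ε₁ ε₂) ht0, lt_min hε₁ hε₂]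
      · have h1 := mul_le_mul_of_nonneg_left (hQlb x) (sub_nonneg.2 ht1)
        have h2 := mul_le_mul_of_nonneg_left (hBlb x) ht0
        rw [hBval x] at h2
        have heq : (1 - t) * (x ⬝ᵥ Q.mulVec x)
            + t * (x ⬝ᵥ Qt.mulVec x - n * (x ⬝ᵥ Qt.mulVec x - x ⬝ᵥ Q.mulVec x))
            = m * (x ⬝ᵥ Q.mulVec x) - (m - 1) * (x ⬝ᵥ Qt.mulVec x) := by
          linear_combination (x ⬝ᵥ Q.mulVec x - x ⬝ᵥ Qt.mulVec x) * htn
        nlinarith [h1, h2, heq]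
  obtain ⟨ε, hε, hquad⟩ := hquad
  -- constants
  set c₀ : ℝ := (2 * Real.pi) ^ (-(d : ℝ) / 2) * Real.sqrt Q.det with hc₀
  set c₁ : ℝ := (2 * Real.pi) ^ (-(d : ℝ) / 2) * Real.sqrt Qt.det with hc₁
  have hc₀pos : 0 < c₀ := by
    have := Real.rpow_pos_of_pos (show (0:ℝ) < 2 * Real.pi by positivity) (-(d : ℝ) / 2)
    have := Real.sqrt_pos.2 hQ.det_pos
    positivity
  have hc₁pos : 0 < c₁ := by
    have := Real.rpow_pos_of_pos (show (0:ℝ) < 2 * Real.pi by positivity) (-(d : ℝ) / 2)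
    have := Real.sqrt_pos.2 hQt.det_pos
    positivity
  set w : Fin d → ℝ := fun i =>
    m * δ i + m * (Q.mulVec μ) i - (m - 1) * (Qt.mulVec μs) i with hw
  set C : ℝ := m * k - (m / 2) * (μ ⬝ᵥ Q.mulVec μ)
      + ((m - 1) / 2) * (μs ⬝ᵥ Qt.mulVec μs) with hC
  set K : ℝ := Real.exp C * (c₀ ^ m * (π * c₁) ^ (1 - m)) with hK
  have hwsum : ∀ α : Fin d → ℝ, (∑ i, w i * α i)
      = m * (δ ⬝ᵥ α) + m * (Q.mulVec μ ⬝ᵥ α) - (m - 1) * (Qt.mulVec μs ⬝ᵥ α) := by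
    intro α
    simp only [hw, dotProduct, Finset.mul_sum, ← Finset.sum_add_distrib, ← Finset.sum_sub_distrib]
    exact Finset.sum_congr rfl fun i _ => by ring
  -- pointwise domination
  have hdom : ∀ α, (f α / g α) ^ m * g α
      ≤ K * Real.exp (-(ε / 2) * ∑ i, α i ^ 2 + ∑ i, w i * α i) := by
    intro α
    have hG1 : 0 < gaussDensity μs Qt α := hgauss_pos μs Qt hQt α
    have hG : 0 < g α := hgpos α
    have hF : 0 < f α := by
      rw [hf]
      exact mul_pos (Real.exp_pos _) (hgauss_pos μ Q hQ α)
    have hπG1 : 0 < π * gaussDensity μs Qt α := mul_pos hπ0 hG1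
    have hle : π * gaussDensity μs Qt α ≤ g α := by
      rw [hg]
      show π * gaussDensity μs Qt α ≤ π * gaussDensity μs Qt α + (1 - π) * g₂ α
      nlinarith [mul_nonneg (by linarith : (0:ℝ) ≤ 1 - π) (hg₂0 α)]
    -- step 1 : (f/g)^m * g = f^m / g^(m-1)
    have step1 : (f α / g α) ^ m * g α = f α ^ m / g α ^ (m - 1) := by
      rw [Real.div_rpow hF.le hG.le]
      have hGm : g α ^ m = g α ^ (m - 1) * g α := by
        rw [← Real.rpow_add_one hG.ne' (m - 1)]
        ring_nf
      rw [hGm]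
      have h1 : g α ^ (m - 1) ≠ 0 := (Real.rpow_pos_of_pos hG _).ne'
      field_simp
    -- step 2
    have step2 : f α ^ m / g α ^ (m - 1) ≤ f α ^ m / (π * gaussDensity μs Qt α) ^ (m - 1) := by
      apply div_le_div_of_nonneg_left (Real.rpow_pos_of_pos hF m).le
        (Real.rpow_pos_of_pos hπG1 _)
      exact Real.rpow_le_rpow hπG1.le hle (by linarith)
    -- step 3 : explicit formula and bound
    set q₀ : ℝ := (α - μ) ⬝ᵥ Q.mulVec (α - μ) with hq₀
    set q₁ : ℝ := (α - μs) ⬝ᵥ Qt.mulVec (α - μs) with hq₁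
    have hfval : f α = c₀ * Real.exp (l α + -(1 / 2) * q₀) := by
      rw [hf]
      simp only [gaussDensity]
      rw [hc₀, hq₀, Real.exp_add]
      ring
    have hg1val : π * gaussDensity μs Qt α = (π * c₁) * Real.exp (-(1 / 2) * q₁) := by
      simp only [gaussDensity, hc₁, hq₁]
      ring
    have hfm : f α ^ m = c₀ ^ m * Real.exp (m * (l α + -(1 / 2) * q₀)) := by
      rw [hfval, Real.mul_rpow hc₀pos.le (Real.exp_pos _).le, ← Real.exp_mul,
        mul_comm (l α + -(1 / 2) * q₀) m]
    have hgm : (π * gaussDensity μs Qt α) ^ (m - 1)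
        = (π * c₁) ^ (m - 1) * Real.exp ((m - 1) * (-(1 / 2) * q₁)) := by
      rw [hg1val, Real.mul_rpow (mul_pos hπ0 hc₁pos).le (Real.exp_pos _).le, ← Real.exp_mul,
        mul_comm (-(1 / 2) * q₁) (m - 1)]
    have step3 : f α ^ m / (π * gaussDensity μs Qt α) ^ (m - 1)
        = c₀ ^ m * (π * c₁) ^ (1 - m)
          * Real.exp (m * l α - (m / 2) * q₀ + ((m - 1) / 2) * q₁) := by
      rw [hfm, hgm]
      have h1 : (π * c₁) ^ ((1:ℝ) - m) = ((π * c₁) ^ (m - 1))⁻¹ := by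
        rw [← Real.rpow_neg (mul_pos hπ0 hc₁pos).le]
        ring_nf
      rw [h1, div_eq_mul_inv, mul_inv, ← Real.exp_neg]
      have h2 : Real.exp (m * (l α + -(1 / 2) * q₀)) * Real.exp (-((m - 1) * (-(1 / 2) * q₁)))
          = Real.exp (m * l α - (m / 2) * q₀ + ((m - 1) / 2) * q₁) := by
        rw [← Real.exp_add]
        congr 1
        ring
      rw [← h2]
      ring
    -- exponent bound
    have hexp : m * l α - (m / 2) * q₀ + ((m - 1) / 2) * q₁
        ≤ C + (-(ε / 2) * ∑ i, α i ^ 2 + ∑ i, w i * α i) := by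
      rw [hC]
      have hq₀e : q₀ = α ⬝ᵥ Q.mulVec α - 2 * (Q.mulVec μ ⬝ᵥ α) + μ ⬝ᵥ Q.mulVec μ :=
        aux_expand hQ.1 α μ
      have hq₁e : q₁ = α ⬝ᵥ Qt.mulVec α - 2 * (Qt.mulVec μs ⬝ᵥ α) + μs ⬝ᵥ Qt.mulVec μs :=
        aux_expand hQt.1 α μs
      have hlm : m * l α ≤ m * (k + δ ⬝ᵥ α) :=
        mul_le_mul_of_nonneg_left (hbound α) hm0
      have hq := hquad α
      rw [hwsum α, hq₀e, hq₁e]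
      linarith [hq, hlm]
    calc (f α / g α) ^ m * g α
        = f α ^ m / g α ^ (m - 1) := step1
      _ ≤ f α ^ m / (π * gaussDensity μs Qt α) ^ (m - 1) := step2
      _ = c₀ ^ m * (π * c₁) ^ (1 - m)
          * Real.exp (m * l α - (m / 2) * q₀ + ((m - 1) / 2) * q₁) := step3
      _ ≤ K * Real.exp (-(ε / 2) * ∑ i, α i ^ 2 + ∑ i, w i * α i) := by
          have e1 : K * Real.exp (-(ε / 2) * ∑ i, α i ^ 2 + ∑ i, w i * α i)
              = c₀ ^ m * (π * c₁) ^ (1 - m)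
                * Real.exp (C + (-(ε / 2) * ∑ i, α i ^ 2 + ∑ i, w i * α i)) := by
            rw [hK, Real.exp_add C (-(ε / 2) * ∑ i, α i ^ 2 + ∑ i, w i * α i),
              mul_comm (Real.exp C) (c₀ ^ m * (π * c₁) ^ (1 - m)), mul_assoc]
          rw [e1]
          exact mul_le_mul_of_nonneg_left (Real.exp_le_exp.2 hexp)
            (mul_nonneg (Real.rpow_pos_of_pos hc₀pos m).le
              (Real.rpow_pos_of_pos (mul_pos hπ0 hc₁pos) _).le)
  -- integrability of the dominating function
  have hHint : Integrable
      (fun α : Fin d → ℝ => K * Real.exp (-(ε / 2) * ∑ i, α i ^ 2 + ∑ i, w i * α i)) :=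
    (aux_integrable (ε / 2) (by positivity) w).const_mul K
  have hfin : (∫⁻ α : Fin d → ℝ,
      (‖K * Real.exp (-(ε / 2) * ∑ i, α i ^ 2 + ∑ i, w i * α i)‖₊ : ENNReal)) < ⊤ :=
    hHint.hasFiniteIntegral
  refine lt_of_le_of_lt (lintegral_mono fun α => ?_) hfin
  exact le_trans (ENNReal.ofReal_le_ofReal (hdom α)) (Real.ofReal_le_enorm _)
end
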